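/- Any replete reflective subcategory of a category with biproducts itself has biproducts; explicitly, if G : A → C is the full inclusion with left adjoint F and C has biproducts ⊕, then for objects X, Y of A, the object F(G(X) ⊕ G(Y)) is simultaneously a coproduct and a product of X and Y in A. -/

import Mathlib

open CategoryTheory CategoryTheory.Limits

/-- A replete reflective subcategory of a category with biproducts has biproducts: if
`G : A ⥤ C` is the fully faithful inclusion with left adjoint `F` and `C` has biproducts, then
for `X Y : A` the object `F(G X ⊞ G Y)` is simultaneously a coproduct and a product
of `X` and `Y` in `A`. -/
theorem reflective_subcategory_has_biproducts
    {C : Type*} [Category C] {A : Type*} [Category A]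
    [HasZeroMorphisms C] [HasBinaryBiproducts C]
    (G : A ⥤ C) [G.Full] [G.Faithful] (F : C ⥤ A) (adj : F ⊣ G) (X Y : A) :
    Nonempty (IsColimit (BinaryCofan.mk
        (G.preimage (biprod.inl ≫ adj.unit.app (G.obj X ⊞ G.obj Y)))
        (G.preimage (biprod.inr ≫ adj.unit.app (G.obj X ⊞ G.obj Y))))) ∧
    Nonempty (IsLimit (BinaryFan.mk
        ((adj.homEquiv (G.obj X ⊞ G.obj Y) X).symm biprod.fst)
        ((adj.homEquiv (G.obj X ⊞ G.obj Y) Y).symm biprod.snd))) := by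
  set W := G.obj X ⊞ G.obj Y with hW
  set u := adj.unit.app W with hu
  -- the candidate inverse of the unit at `W`
  set φ : G.obj (F.obj W) ⟶ W :=
    biprod.lift (G.map (F.map biprod.fst ≫ adj.counit.app X))
      (G.map (F.map biprod.snd ≫ adj.counit.app Y)) with hφ
  have huφ : u ≫ φ = 𝟙 W := by
    apply biprod.hom_ext
    · simp [hφ, hu, Functor.map_comp, ← adj.unit_naturality_assoc]
    · simp [hφ, hu, Functor.map_comp, ← adj.unit_naturality_assoc]
  have hFu : F.map u ≫ adj.counit.app (F.obj W) = 𝟙 _ := adj.left_triangle_components W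
  have hFφ : F.map φ = adj.counit.app (F.obj W) := by
    have h1 : F.map u ≫ F.map φ = 𝟙 _ := by rw [← F.map_comp, huφ]; simp
    have h2 : F.map u = 𝟙 _ ≫ inv (adj.counit.app (F.obj W)) :=
      (IsIso.eq_comp_inv _).mpr hFu
    haveI : IsIso (F.map u) := by rw [h2, Category.id_comp]; infer_instance
    rw [← cancel_epi (F.map u), h1, hFu]
  have hφu : φ ≫ u = 𝟙 _ := by
    have := adj.unit_naturality φ
    rw [← hu] at this
    rw [← this, hFφ]
    simp
  haveI : IsIso u := ⟨φ, huφ, hφu⟩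
  -- G.map of legs
  have hπ₁ : G.map ((adj.homEquiv W X).symm biprod.fst) = inv u ≫ biprod.fst := by
    rw [IsIso.eq_inv_comp]
    simp [hu, Adjunction.homEquiv_counit, ← adj.unit_naturality_assoc]
  have hπ₂ : G.map ((adj.homEquiv W Y).symm biprod.snd) = inv u ≫ biprod.snd := by
    rw [IsIso.eq_inv_comp]
    simp [hu, Adjunction.homEquiv_counit, ← adj.unit_naturality_assoc]
  constructor
  · refine ⟨BinaryCofan.isColimitMk
      (fun s => G.preimage (inv u ≫ biprod.desc (G.map s.inl) (G.map s.inr)))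
      (fun s => ?_) (fun s => ?_) (fun s m h1 h2 => ?_)⟩
    · apply G.map_injective; simp
    · apply G.map_injective; simp
    · apply G.map_injective
      simp only [Functor.map_preimage, IsIso.eq_inv_comp]
      apply biprod.hom_ext'
      · rw [biprod.inl_desc, ← h1]; simp
      · rw [biprod.inr_desc, ← h2]; simp
  · refine ⟨BinaryFan.isLimitMk
      (fun s => G.preimage (biprod.lift (G.map s.fst) (G.map s.snd) ≫ u))
      (fun s => ?_) (fun s => ?_) (fun s m h1 h2 => ?_)⟩
    · apply G.map_injective; rw [Functor.map_comp, hπ₁]; simp; exact biprod.lift_fst _ _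
    · apply G.map_injective; rw [Functor.map_comp, hπ₂]; simp; exact biprod.lift_snd _ _
    · apply G.map_injective
      simp only [Functor.map_preimage]
      have key : G.map m ≫ inv u = biprod.lift (G.map s.fst) (G.map s.snd) := by
        apply biprod.hom_ext
        · rw [Category.assoc, ← hπ₁, ← G.map_comp, h1]; exact (biprod.lift_fst _ _).symm
        · rw [Category.assoc, ← hπ₂, ← G.map_comp, h2]; exact (biprod.lift_snd _ _).symm
      rw [← key]; simp
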